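/- Let (I_1,...,I_n) be a Grassmann necklace and M = { H ∈ binom([n], k) : H ≥_t I_t for all t ∈ [n] } the associated positroid. Then for each t, I_t ∈ M and I_t is the unique ≤_t-minimal element of M. -/

import Mathlib

open Finset

/-- Position of `a` in the cyclic (linear) order starting at `t` on `Fin n`. -/
def cval {n : ℕ} (t a : Fin n) : ℕ := ((a - t : Fin n) : ℕ)

/-- Gale order on finsets of `Fin n` induced by the linear order with key `f`:
compare the sorted lists of keys coordinatewise. -/
def galeLEKey {n : ℕ} (f : Fin n → ℕ) (A B : Finset (Fin n)) : Prop :=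
  List.Forall₂ (· ≤ ·) ((A.image f).sort (· ≤ ·)) ((B.image f).sort (· ≤ ·))

/-- Gale order `≤_t` induced by the cyclic order starting at `t`. -/
def galeLE {n : ℕ} (t : Fin n) (A B : Finset (Fin n)) : Prop :=
  galeLEKey (cval t) A B

/-- The set of maximal elements of `D` w.r.t. `≤_a` (a singleton when `D` is nonempty). -/
def cmax {n : ℕ} (a : Fin n) (D : Finset (Fin n)) : Finset (Fin n) :=
  D.filter (fun x => ∀ y ∈ D, cval a y ≤ cval a x)

/-- The set of minimal elements of `D` w.r.t. `≤_a` (a singleton when `D` is nonempty). -/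
def cmin {n : ℕ} (a : Fin n) (D : Finset (Fin n)) : Finset (Fin n) :=
  D.filter (fun x => ∀ y ∈ D, cval a x ≤ cval a y)

/-- A Grassmann necklace on `[n]`. -/
def IsGrassmannNecklace {n : ℕ} [NeZero n] (I : Fin n → Finset (Fin n)) : Prop :=
  ∀ i : Fin n,
    (i ∈ I i → ∃ j : Fin n, I (i + 1) = insert j (I i \ {i})) ∧
    (i ∉ I i → I (i + 1) = I i)

/-- A decorated permutation: a permutation with fixed points colored by `1` or `-1`
(non-fixed points carry the dummy color `1`). -/
structure DecoratedPerm (n : ℕ) where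
  π : Equiv.Perm (Fin n)
  col : Fin n → ℤ
  col_fixed : ∀ i, π i = i → col i = 1 ∨ col i = -1
  col_nonfixed : ∀ i, π i ≠ i → col i = 1

/-- The Grassmann necklace associated to a decorated permutation:
`I_r = { i : i <_r π⁻¹(i), or π(i) = i and col(i) = -1 }`. -/
def necklaceOf {n : ℕ} (P : DecoratedPerm n) : Fin n → Finset (Fin n) :=
  fun r => Finset.univ.filter
    (fun i => cval r i < cval r (P.π.symm i) ∨ (P.π i = i ∧ P.col i = -1))

/-- The forward map from Grassmann necklaces to decorated permutations:
`P` corresponds to the necklace `I`. -/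
def Corresponds {n : ℕ} [NeZero n] (I : Fin n → Finset (Fin n)) (P : DecoratedPerm n) : Prop :=
  ∀ i : Fin n,
    ((I (i + 1) = I i ∧ i ∉ I i) → (P.π i = i ∧ P.col i = 1)) ∧
    ((I (i + 1) = I i ∧ i ∈ I i) → (P.π i = i ∧ P.col i = -1)) ∧
    (∀ j : Fin n, j ≠ i → i ∈ I i → I (i + 1) = insert j (I i \ {i}) → P.π i = j)

/-- `phiSet I j a` is `{j}` if `j ∈ I_a`, and otherwise `{max_a (I_a \ I_j)}`. -/
def phiSet {n : ℕ} (I : Fin n → Finset (Fin n)) (j a : Fin n) : Finset (Fin n) :=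
  if j ∈ I a then {j} else cmax a (I a \ I j)

/-- One pass of the contraction algorithm (fuel-indexed; the loop walks `a ← a+1`). -/
def contractLoop {n : ℕ} [NeZero n] (π : Equiv.Perm (Fin n)) (j : Fin n) :
    ℕ → (Fin n → Fin n) → (Fin n → ℤ) → Fin n → Fin n →
      (Fin n → Fin n) × (Fin n → ℤ)
  | 0, μ, c, q, a => (Function.update μ a q, c)
  | fuel + 1, μ, c, q, a =>
    if π a = j then (Function.update μ a q, c)
    else if q = a ∨ (cval (a + 1) q < cval (a + 1) (π a) ∧
                      cval (a + 1) (π a) < cval (a + 1) j) then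
      contractLoop π j fuel (Function.update μ a q)
        (if q = a then Function.update c a 1 else c) (π a) (a + 1)
    else
      contractLoop π j fuel μ c q (a + 1)

/-- The contraction algorithm: output `(μ, col')` from `(π, col)` and `j`. -/
def contractAlg {n : ℕ} [NeZero n] (π : Equiv.Perm (Fin n)) (col : Fin n → ℤ) (j : Fin n) :
    (Fin n → Fin n) × (Fin n → ℤ) :=
  contractLoop π j n (Function.update (⇑π) j j) (Function.update col j 1) (π j) (j + 1)

/-- One pass of the restriction algorithm (the loop walks `a ← a-1`). -/
def restrictLoop {n : ℕ} [NeZero n] (π : Equiv.Perm (Fin n)) (j : Fin n) :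
    ℕ → (Fin n → Fin n) → (Fin n → ℤ) → Fin n → Fin n →
      (Fin n → Fin n) × (Fin n → ℤ)
  | 0, μ, c, q, a => (Function.update μ a q, c)
  | fuel + 1, μ, c, q, a =>
    if π a = j then (Function.update μ a q, c)
    else if q = a ∨ (cval a j < cval a (π a) ∧ cval a (π a) < cval a q) then
      restrictLoop π j fuel (Function.update μ a q)
        (if q = a then Function.update c a 1 else c) (π a) (a - 1)
    else
      restrictLoop π j fuel μ c q (a - 1)

/-- The restriction algorithm: output `(μ, col')` from `(π, col)` and `j`. -/
def restrictAlg {n : ℕ} [NeZero n] (π : Equiv.Perm (Fin n)) (col : Fin n → ℤ) (j : Fin n) :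
    (Fin n → Fin n) × (Fin n → ℤ) :=
  restrictLoop π j n (Function.update (⇑π) j j) (Function.update col j 1) (π j) (j - 1)


section AuxProof

open Fin.CommRing Fin.NatCast

variable {n : ℕ} [NeZero n]

lemma cval_lt (t a : Fin n) : cval t a < n := (a - t).isLt

lemma cval_inj (t : Fin n) : Function.Injective (cval t) := by
  intro a b h
  have h2 : a - t = b - t := Fin.val_injective h
  have h3 := congrArg (· + t) h2
  simpa [sub_add_cancel] using h3

lemma cval_base (t c : Fin n) : cval t (t + c) = (c : ℕ) := by
  simp [cval, add_sub_cancel_left]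

lemma cval_cast (t : Fin n) (d : ℕ) (hd : d < n) : cval t (t + (d : Fin n)) = d := by
  rw [cval_base]; exact Fin.val_cast_of_lt hd

lemma cval_self (t : Fin n) : cval t t = 0 := by simp [cval]

lemma cval_flip (i t a : Fin n) (hit : i ≠ t) (h : cval i a < cval i t) :
    cval t i ≤ cval t a := by
  have key : cval t a = (cval i a + cval t i) % n := by
    have hsub : a - t = (a - i) + (i - t) := by ring
    rw [cval, hsub, Fin.val_add]; rfl
  have hsum : cval i t + cval t i = n := by
    have h0 : (t - i) + (i - t) = (0 : Fin n) := by ring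
    have hmod : (cval i t + cval t i) % n = 0 := by
      have := congrArg Fin.val h0
      rw [Fin.val_add, Fin.val_zero] at this
      exact this
    have hne0 : cval i t ≠ 0 := by
      intro h0'
      apply hit
      have : t - i = 0 := Fin.val_injective (by simpa [cval] using h0')
      have := sub_eq_zero.mp this
      exact this.symm
    have hd : n ∣ cval i t + cval t i := Nat.dvd_of_mod_eq_zero hmod
    obtain ⟨c, hc⟩ := hd
    have h1 := cval_lt i t
    have h2 := cval_lt t i
    rcases c with _ | _ | c
    · omega
    · omega
    · have hge : n * (c + 1 + 1) = n * c + n + n := by ring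
      omega
  have hlt : cval i a + cval t i < n := by omega
  rw [key, Nat.mod_eq_of_lt hlt]
  omega

variable (I : Fin n → Finset (Fin n))

lemma persist (hI : IsGrassmannNecklace I) :
    ∀ (p : ℕ) (r a : Fin n), a ∈ I r → (∀ q, q < p → r + (q : Fin n) ≠ a) →
      a ∈ I (r + (p : Fin n))
  | 0, r, a, ha, _ => by simpa using ha
  | p + 1, r, a, ha, hq => by
    have hb : a ∈ I (r + (p : Fin n)) :=
      persist hI p r a ha (fun q h hh => hq q (Nat.lt_succ_of_lt h) hh)
    set b := r + (p : Fin n) with hbdef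
    have hne : a ≠ b := fun h => hq p (Nat.lt_succ_self p) (by rw [← hbdef, ← h])
    have hcast : ((p + 1 : ℕ) : Fin n) = ((p : ℕ) : Fin n) + 1 := by push_cast; ring
    rw [hcast, ← add_assoc, ← hbdef]
    by_cases hbb : b ∈ I b
    · obtain ⟨j, hj⟩ := (hI b).1 hbb
      rw [hj]
      exact Finset.mem_insert_of_mem (by simp [Finset.mem_sdiff, hb, hne])
    · rw [(hI b).2 hbb]; exact hb

lemma persist' (hI : IsGrassmannNecklace I) (t i a : Fin n)
    (h : cval t i ≤ cval t a) (ha : a ∈ I t) : a ∈ I i := by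
  have hi : i = t + ((cval t i : ℕ) : Fin n) := by
    rw [cval, Fin.cast_val_eq_self, add_sub_cancel]
  rw [hi]
  apply persist I hI _ t a ha
  intro q hq heq
  have hqn : q < n := lt_trans (lt_of_lt_of_le hq h) (cval_lt t a)
  have : cval t a = q := by rw [← heq, cval_cast t q hqn]
  omega

/-- Main counting lemma, by induction on the distance `d` from `i`. -/
lemma count_main (hI : IsGrassmannNecklace I) (k : ℕ) (hcard : ∀ r : Fin n, (I r).card = k)
    (i : Fin n) :
    ∀ d : ℕ, d < n → ∀ m : ℕ,
      ((I (i + (d : Fin n))).filter (fun a => cval i a ≤ m)).card ≤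
        ((I i).filter (fun a => cval i a ≤ m)).card
  | 0, _, m => by simp
  | d + 1, hdn, m => by
    have hd : d < n := Nat.lt_of_succ_lt hdn
    have IH := count_main hI k hcard i d hd
    set t := i + (d : Fin n) with htdef
    have hdt : cval i t = d := cval_cast i d hd
    have hcast : i + ((d + 1 : ℕ) : Fin n) = t + 1 := by
      rw [htdef]; push_cast; ring
    rw [hcast]
    have hdt1 : cval i (t + 1) = d + 1 := by
      rw [htdef, add_assoc, ← Nat.cast_one (R := Fin n), ← Nat.cast_add]
      exact cval_cast i (d + 1) hdn
    by_cases hmem : t ∈ I t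
    · obtain ⟨j, hj⟩ := (hI t).1 hmem
      by_cases hjt : j = t
      · rw [hj, hjt, Finset.sdiff_singleton_eq_erase, Finset.insert_erase hmem]
        exact IH m
      · have hjI : j ∉ I t := by
          intro hjmem
          have hjin : j ∈ I t \ {t} := by simp [Finset.mem_sdiff, hjmem, hjt]
          have heq : I (t + 1) = I t \ {t} := by rw [hj, Finset.insert_eq_self.mpr hjin]
          have hc1 : (I (t + 1)).card = k := hcard _
          rw [heq] at hc1
          have hc2 : (I t \ {t}).card = k - 1 := by
            rw [Finset.sdiff_singleton_eq_erase, Finset.card_erase_of_mem hmem, hcard]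
          have hk : 1 ≤ k := by
            rw [← hcard t]; exact Finset.card_pos.mpr ⟨t, hmem⟩
          omega
        rw [hj, Finset.sdiff_singleton_eq_erase]
        by_cases hbump : m < cval i t ∧ cval i j ≤ m
        · -- bump case: direct subset of I i
          apply Finset.card_le_card
          intro a ha
          rw [Finset.mem_filter] at ha ⊢
          obtain ⟨haI, ham⟩ := ha
          refine ⟨?_, ham⟩
          have hine : i ≠ t + 1 := by
            intro h; rw [← h, cval_self] at hdt1; omega
          have halt : cval i a < cval i (t + 1) := by omega
          exact persist' I hI (t + 1) i a (cval_flip i (t + 1) a hine halt) (by rwa [hj, Finset.sdiff_singleton_eq_erase])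
        · -- non-bump: count does not increase, use IH
          refine le_trans ?_ (IH m)
          by_cases hpt : cval i t ≤ m
          · rw [Finset.filter_insert, Finset.filter_erase]
            have htf : t ∈ (I t).filter (fun a => cval i a ≤ m) :=
              Finset.mem_filter.mpr ⟨hmem, hpt⟩
            have hcpos : 1 ≤ ((I t).filter (fun a => cval i a ≤ m)).card :=
              Finset.card_pos.mpr ⟨t, htf⟩
            have hce : (((I t).filter (fun a => cval i a ≤ m)).erase t).card =
                ((I t).filter (fun a => cval i a ≤ m)).card - 1 :=
              Finset.card_erase_of_mem htf
            by_cases hpj : cval i j ≤ m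
            · simp only [if_pos hpj]
              calc (insert j (((I t).filter (fun a => cval i a ≤ m)).erase t)).card
                  ≤ (((I t).filter (fun a => cval i a ≤ m)).erase t).card + 1 :=
                    Finset.card_insert_le _ _
                _ ≤ _ := by omega
            · simp only [if_neg hpj]
              omega
          · have hpj : ¬ cval i j ≤ m := fun h => hbump ⟨by omega, h⟩
            have heq2 : (insert j ((I t).erase t)).filter (fun a => cval i a ≤ m)
                = (I t).filter (fun a => cval i a ≤ m) := by
              rw [Finset.filter_insert, if_neg hpj, Finset.filter_erase,
                Finset.erase_eq_of_notMem]
              intro hmemf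
              exact hpt (Finset.mem_filter.mp hmemf).2
            rw [heq2]
    · rw [(hI t).2 hmem]; exact IH m

lemma sorted_get_le_iff : ∀ (L : List ℕ), L.Pairwise (· ≤ ·) → ∀ (m i : ℕ) (hi : i < L.length),
    (L.get ⟨i, hi⟩ ≤ m ↔ i < L.countP (fun x => x ≤ m))
  | [], _, m, i, hi => absurd hi (by simp)
  | a :: L, hL, m, i, hi => by
    rw [List.pairwise_cons] at hL
    by_cases ham : a ≤ m
    · rw [List.countP_cons_of_pos (by simpa using ham)]
      cases i with
      | zero => simpa using ham
      | succ i =>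
        have hi' : i < L.length := by simpa using hi
        have := sorted_get_le_iff L hL.2 m i hi'
        simp only [List.get_cons_succ]
        rw [this]
        omega
    · have hall : L.countP (fun x => x ≤ m) = 0 := by
        rw [List.countP_eq_zero]
        intro x hx
        simp only [decide_eq_true_eq]
        exact fun h => ham (le_trans (hL.1 x hx) h)
      rw [List.countP_cons_of_neg (by simpa using ham), hall]
      cases i with
      | zero => simp [ham]
      | succ i =>
        have hi' : i < L.length := by simpa using hi
        simp only [List.get_cons_succ]
        constructor
        · intro h
          exact absurd (le_trans (hL.1 _ (List.get_mem L ⟨i, hi'⟩)) h) ham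
        · omega

lemma count_card_eq (f : Fin n → ℕ) (hf : Function.Injective f) (A : Finset (Fin n)) (m : ℕ) :
    ((A.image f).sort (· ≤ ·)).countP (fun x => x ≤ m) =
      (A.filter (fun a => f a ≤ m)).card := by
  have h1 : (((A.image f).sort (· ≤ ·) : Multiset ℕ)).countP (fun x => x ≤ m) =
      ((A.image f).sort (· ≤ ·)).countP (fun x => x ≤ m) := Multiset.coe_countP _ _
  rw [← h1, Finset.sort_eq]
  rw [Multiset.countP_eq_card_filter]
  have h2 : ((A.image f).filter (fun x => x ≤ m)).card =
      (A.filter (fun a => f a ≤ m)).card := by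
    rw [Finset.filter_image]
    exact Finset.card_image_of_injective _ hf
  have h3 : ((A.image f).filter (fun x => x ≤ m)).card =
      Multiset.card (Multiset.filter (fun x => x ≤ m) (A.image f).val) := by
    rw [Finset.card_def, Finset.filter_val]
  omega

lemma galeLEKey_of_count (f : Fin n → ℕ) (hf : Function.Injective f) (A B : Finset (Fin n))
    (hcard : A.card = B.card)
    (hcount : ∀ m, (B.filter (fun a => f a ≤ m)).card ≤ (A.filter (fun a => f a ≤ m)).card) :
    galeLEKey f A B := by
  unfold galeLEKey
  rw [List.forall₂_iff_get]
  have hlen : ((A.image f).sort (· ≤ ·)).length = ((B.image f).sort (· ≤ ·)).length := by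
    rw [Finset.length_sort, Finset.length_sort,
      Finset.card_image_of_injective _ hf, Finset.card_image_of_injective _ hf, hcard]
  refine ⟨hlen, fun i h1 h2 => ?_⟩
  set u := (A.image f).sort (· ≤ ·) with hu
  set v := (B.image f).sort (· ≤ ·) with hv
  by_contra hcon
  push_neg at hcon
  set m := v.get ⟨i, h2⟩ with hm
  have hvc : i < v.countP (fun x => x ≤ m) :=
    (sorted_get_le_iff v (Finset.pairwise_sort _ _) m i h2).mp le_rfl
  have huc : ¬ i < u.countP (fun x => x ≤ m) := by
    intro h
    exact absurd ((sorted_get_le_iff u (Finset.pairwise_sort _ _) m i h1).mpr h) (not_le.mpr hcon)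
  rw [hu, count_card_eq f hf A m] at huc
  rw [hv, count_card_eq f hf B m] at hvc
  exact huc (lt_of_lt_of_le hvc (hcount m))

lemma galeLEKey_antisymm (f : Fin n → ℕ) (hf : Function.Injective f) (A B : Finset (Fin n))
    (h1 : galeLEKey f A B) (h2 : galeLEKey f B A) : A = B := by
  unfold galeLEKey at h1 h2
  rw [List.forall₂_iff_get] at h1 h2
  have heq : (A.image f).sort (· ≤ ·) = (B.image f).sort (· ≤ ·) := by
    apply List.ext_get h1.1
    intro i hA hB
    exact le_antisymm (h1.2 i hA hB) (h2.2 i hB hA)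
  have himg : A.image f = B.image f := by
    rw [← Finset.sort_toFinset (A.image f) (· ≤ ·), heq, Finset.sort_toFinset]
  exact Finset.image_injective hf himg

lemma galeLEKey_refl (f : Fin n → ℕ) (A : Finset (Fin n)) : galeLEKey f A A :=
  List.forall₂_same.mpr (fun x _ => le_rfl)

/-- `I s ≤_s I t` for a Grassmann necklace. -/
lemma necklace_gale (hI : IsGrassmannNecklace I) (k : ℕ)
    (hcard : ∀ r : Fin n, (I r).card = k) (s t : Fin n) : galeLE s (I s) (I t) := by
  have ht : t = s + ((cval s t : ℕ) : Fin n) := by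
    rw [cval, Fin.cast_val_eq_self, add_sub_cancel]
  refine galeLEKey_of_count (cval s) (cval_inj s) _ _ (by rw [hcard, hcard]) (fun m => ?_)
  rw [ht]
  exact count_main I hI k hcard s (cval s t) (cval_lt s t) m

end AuxProof

/-- for a Grassmann necklace `I` of `k`-subsets, with
`M = { H : H.card = k ∧ H ≥_t I_t for all t }`, each `I_t` is a member of `M` and is
its unique `≤_t`-minimal element. -/
theorem necklace_entries_minimal_bases (n k : ℕ) [NeZero n]
    (I : Fin n → Finset (Fin n)) (hI : IsGrassmannNecklace I)
    (hcard : ∀ i : Fin n, (I i).card = k) :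
    ∀ t : Fin n,
      ((I t).card = k ∧ ∀ s : Fin n, galeLE s (I s) (I t)) ∧
      (∀ H : Finset (Fin n),
        (H.card = k ∧ ∀ s : Fin n, galeLE s (I s) H) → galeLE t (I t) H) ∧
      (∀ H : Finset (Fin n),
        (H.card = k ∧ ∀ s : Fin n, galeLE s (I s) H) →
        (∀ H' : Finset (Fin n),
          (H'.card = k ∧ ∀ s : Fin n, galeLE s (I s) H') → galeLE t H H') →
        H = I t) := by
  intro t
  have mem : ∀ t : Fin n, (I t).card = k ∧ ∀ s : Fin n, galeLE s (I s) (I t) :=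
    fun t => ⟨hcard t, fun s => necklace_gale I hI k hcard s t⟩
  refine ⟨mem t, ?_, ?_⟩
  · intro H hH
    exact hH.2 t
  · intro H hH hmin
    have h1 : galeLE t (I t) H := hH.2 t
    have h2 : galeLE t H (I t) := hmin (I t) (mem t)
    exact galeLEKey_antisymm (cval t) (cval_inj t) H (I t) h2 h1
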